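/- Let k₁, k₂, k₃ ∈ ℕ and define w : ℝ³ → ℝ by w(x) = cos(2πk₁x₁/l₁)·cos(2πk₂x₂/l₂)·cos(πk₃(x₃+l₃⁻)/l₃), and the vector fields E := (0, ∂₃w, −∂₂w) and H := (iωμ)⁻¹·(−∂₂²w − ∂₃²w, ∂₁∂₂w, ∂₁∂₃w). Then: (a) the first component E₁ vanishes identically on ℝ³; (b) E₂(x) = 0 whenever x₃ = −l₃⁻ or x₃ = l₃⁺; (c) E and H are l₁-periodic in x₁ and l₂-periodic in x₂; and (d) if (k₂,k₃) ≠ (0,0), then E is not identically zero on Ω. -/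

import Mathlib

open Real Complex Filter Topology

/-- Partial derivative in the first coordinate. -/
noncomputable def pd1 {F : Type*} [NormedAddCommGroup F] [NormedSpace ℝ F]
    (f : ℝ × ℝ × ℝ → F) (x : ℝ × ℝ × ℝ) : F :=
  deriv (fun t => f (t, x.2.1, x.2.2)) x.1

/-- Partial derivative in the second coordinate. -/
noncomputable def pd2 {F : Type*} [NormedAddCommGroup F] [NormedSpace ℝ F]
    (f : ℝ × ℝ × ℝ → F) (x : ℝ × ℝ × ℝ) : F :=
  deriv (fun t => f (x.1, t, x.2.2)) x.2.1

/-- Partial derivative in the third coordinate. -/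
noncomputable def pd3 {F : Type*} [NormedAddCommGroup F] [NormedSpace ℝ F]
    (f : ℝ × ℝ × ℝ → F) (x : ℝ × ℝ × ℝ) : F :=
  deriv (fun t => f (x.1, x.2.1, t)) x.2.2

/-- Curl of a complex vector field on ℝ³. -/
noncomputable def curl3 (F : ℝ × ℝ × ℝ → ℂ × ℂ × ℂ) (x : ℝ × ℝ × ℝ) : ℂ × ℂ × ℂ :=
  (pd2 (fun y => (F y).2.2) x - pd3 (fun y => (F y).2.1) x,
   pd3 (fun y => (F y).1) x - pd1 (fun y => (F y).2.2) x,
   pd1 (fun y => (F y).2.1) x - pd2 (fun y => (F y).1) x)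

/-- Divergence of a complex vector field on ℝ³. -/
noncomputable def div3 (F : ℝ × ℝ × ℝ → ℂ × ℂ × ℂ) (x : ℝ × ℝ × ℝ) : ℂ :=
  pd1 (fun y => (F y).1) x + pd2 (fun y => (F y).2.1) x + pd3 (fun y => (F y).2.2) x

/-- Laplacian of a scalar function on ℝ³. -/
noncomputable def lap {F : Type*} [NormedAddCommGroup F] [NormedSpace ℝ F]
    (f : ℝ × ℝ × ℝ → F) (x : ℝ × ℝ × ℝ) : F :=
  pd1 (pd1 f) x + pd2 (pd2 f) x + pd3 (pd3 f) x

/-- Gradient of a complex scalar function on ℝ³. -/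
noncomputable def grad3 (f : ℝ × ℝ × ℝ → ℂ) (x : ℝ × ℝ × ℝ) : ℂ × ℂ × ℂ :=
  (pd1 f x, pd2 f x, pd3 f x)

lemma pd_shift1 (f : ℝ × ℝ × ℝ → ℂ) (l : ℝ)
    (hf : ∀ x : ℝ × ℝ × ℝ, f (x.1 + l, x.2.1, x.2.2) = f x) (x : ℝ × ℝ × ℝ) :
    pd1 f (x.1 + l, x.2.1, x.2.2) = pd1 f x ∧
    pd2 f (x.1 + l, x.2.1, x.2.2) = pd2 f x ∧
    pd3 f (x.1 + l, x.2.1, x.2.2) = pd3 f x := by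
  refine ⟨?_, ?_, ?_⟩
  · show deriv (fun t => f (t, x.2.1, x.2.2)) (x.1 + l) = deriv (fun t => f (t, x.2.1, x.2.2)) x.1
    rw [← deriv_comp_add_const]
    congr 1
    funext t
    exact hf (t, x.2.1, x.2.2)
  · show deriv (fun t => f (x.1 + l, t, x.2.2)) x.2.1 = deriv (fun t => f (x.1, t, x.2.2)) x.2.1
    congr 1; funext t; exact hf (x.1, t, x.2.2)
  · show deriv (fun t => f (x.1 + l, x.2.1, t)) x.2.2 = deriv (fun t => f (x.1, x.2.1, t)) x.2.2
    congr 1; funext t; exact hf (x.1, x.2.1, t)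

lemma pd_shift2 (f : ℝ × ℝ × ℝ → ℂ) (l : ℝ)
    (hf : ∀ x : ℝ × ℝ × ℝ, f (x.1, x.2.1 + l, x.2.2) = f x) (x : ℝ × ℝ × ℝ) :
    pd1 f (x.1, x.2.1 + l, x.2.2) = pd1 f x ∧
    pd2 f (x.1, x.2.1 + l, x.2.2) = pd2 f x ∧
    pd3 f (x.1, x.2.1 + l, x.2.2) = pd3 f x := by
  refine ⟨?_, ?_, ?_⟩
  · show deriv (fun t => f (t, x.2.1 + l, x.2.2)) x.1 = deriv (fun t => f (t, x.2.1, x.2.2)) x.1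
    congr 1; funext t; exact hf (t, x.2.1, x.2.2)
  · show deriv (fun t => f (x.1, t, x.2.2)) (x.2.1 + l) = deriv (fun t => f (x.1, t, x.2.2)) x.2.1
    rw [← deriv_comp_add_const]
    congr 1; funext t; exact hf (x.1, t, x.2.2)
  · show deriv (fun t => f (x.1, x.2.1 + l, t)) x.2.2 = deriv (fun t => f (x.1, x.2.1, t)) x.2.2
    congr 1; funext t; exact hf (x.1, x.2.1, t)

set_option maxHeartbeats 1000000 in
/-- boundary, interface and periodicity properties of the eigenfunction
candidate, together with non-triviality. -/
theorem stmt2 (l₁ l₂ l₃p l₃m ε μ ω : ℝ)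
    (hl₁ : 0 < l₁) (hl₂ : 0 < l₂) (hl₃p : 0 < l₃p) (hl₃m : 0 < l₃m)
    (hε : 0 < ε) (hμ : 0 < μ) (hω : 0 < ω)
    (k₁ k₂ k₃ : ℕ)
    (w : ℝ × ℝ × ℝ → ℂ)
    (hw : w = fun x => ((Real.cos (2 * π * (k₁ : ℝ) * x.1 / l₁) *
        Real.cos (2 * π * (k₂ : ℝ) * x.2.1 / l₂) *
        Real.cos (π * (k₃ : ℝ) * (x.2.2 + l₃m) / (l₃p + l₃m)) : ℝ) : ℂ))
    (E H : ℝ × ℝ × ℝ → ℂ × ℂ × ℂ)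
    (hE : E = fun x => (0, pd3 w x, -(pd2 w x)))
    (hH : H = fun x => (Complex.I * (ω : ℂ) * (μ : ℂ))⁻¹ •
        ((-(pd2 (pd2 w) x) - pd3 (pd3 w) x, pd1 (pd2 w) x, pd1 (pd3 w) x) : ℂ × ℂ × ℂ)) :
    (∀ x : ℝ × ℝ × ℝ, (E x).1 = 0) ∧
    (∀ x : ℝ × ℝ × ℝ, x.2.2 = -l₃m ∨ x.2.2 = l₃p → (E x).2.1 = 0) ∧
    (∀ x : ℝ × ℝ × ℝ, E (x.1 + l₁, x.2.1, x.2.2) = E x ∧ E (x.1, x.2.1 + l₂, x.2.2) = E x ∧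
      H (x.1 + l₁, x.2.1, x.2.2) = H x ∧ H (x.1, x.2.1 + l₂, x.2.2) = H x) ∧
    ((k₂, k₃) ≠ (0, 0) → ∃ x : ℝ × ℝ × ℝ,
      (x.1 ∈ Set.Ioo 0 l₁ ∧ x.2.1 ∈ Set.Ioo 0 l₂ ∧ x.2.2 ∈ Set.Ioo (-l₃m) l₃p) ∧ E x ≠ 0) := by
  have hL : (0:ℝ) < l₃p + l₃m := by linarith
  -- explicit formulas for pd3 w and pd2 w
  have key3 : ∀ x : ℝ × ℝ × ℝ, pd3 w x =
      ((Real.cos (2 * π * (k₁ : ℝ) * x.1 / l₁) * Real.cos (2 * π * (k₂ : ℝ) * x.2.1 / l₂) *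
        (-Real.sin (π * (k₃ : ℝ) * (x.2.2 + l₃m) / (l₃p + l₃m)) *
          (π * (k₃ : ℝ) * 1 / (l₃p + l₃m))) : ℝ) : ℂ) := by
    intro x
    have h1 : HasDerivAt (fun t : ℝ => π * (k₃ : ℝ) * (t + l₃m) / (l₃p + l₃m))
        (π * (k₃ : ℝ) * 1 / (l₃p + l₃m)) x.2.2 :=
      (((hasDerivAt_id x.2.2).add_const l₃m).const_mul (π * (k₃ : ℝ))).div_const _
    rw [hw]
    exact ((h1.cos.const_mul (Real.cos (2 * π * (k₁ : ℝ) * x.1 / l₁) *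
        Real.cos (2 * π * (k₂ : ℝ) * x.2.1 / l₂))).ofReal_comp).deriv
  have key2 : ∀ x : ℝ × ℝ × ℝ, pd2 w x =
      ((Real.cos (2 * π * (k₁ : ℝ) * x.1 / l₁) *
        (-Real.sin (2 * π * (k₂ : ℝ) * x.2.1 / l₂) * (2 * π * (k₂ : ℝ) * 1 / l₂)) *
        Real.cos (π * (k₃ : ℝ) * (x.2.2 + l₃m) / (l₃p + l₃m)) : ℝ) : ℂ) := by
    intro x
    have h1 : HasDerivAt (fun t : ℝ => 2 * π * (k₂ : ℝ) * t / l₂)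
        (2 * π * (k₂ : ℝ) * 1 / l₂) x.2.1 :=
      ((hasDerivAt_id x.2.1).const_mul (2 * π * (k₂ : ℝ))).div_const _
    rw [hw]
    exact (((h1.cos.const_mul (Real.cos (2 * π * (k₁ : ℝ) * x.1 / l₁))).mul_const
        (Real.cos (π * (k₃ : ℝ) * (x.2.2 + l₃m) / (l₃p + l₃m)))).ofReal_comp).deriv
  -- periodicity of w
  have hwp1 : ∀ x : ℝ × ℝ × ℝ, w (x.1 + l₁, x.2.1, x.2.2) = w x := by
    intro x
    rw [hw]
    dsimp only
    have harg : 2 * π * (k₁ : ℝ) * (x.1 + l₁) / l₁ =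
        2 * π * (k₁ : ℝ) * x.1 / l₁ + (k₁ : ℝ) * (2 * π) := by
      field_simp
    rw [harg, Real.cos_add_nat_mul_two_pi]
  have hwp2 : ∀ x : ℝ × ℝ × ℝ, w (x.1, x.2.1 + l₂, x.2.2) = w x := by
    intro x
    rw [hw]
    dsimp only
    have harg : 2 * π * (k₂ : ℝ) * (x.2.1 + l₂) / l₂ =
        2 * π * (k₂ : ℝ) * x.2.1 / l₂ + (k₂ : ℝ) * (2 * π) := by
      field_simp
    rw [harg, Real.cos_add_nat_mul_two_pi]
  have p1 := pd_shift1 w l₁ hwp1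
  have p2 := pd_shift2 w l₂ hwp2
  have q1a := pd_shift1 (pd2 w) l₁ (fun x => (p1 x).2.1)
  have q1b := pd_shift1 (pd3 w) l₁ (fun x => (p1 x).2.2)
  have q2a := pd_shift2 (pd2 w) l₂ (fun x => (p2 x).2.1)
  have q2b := pd_shift2 (pd3 w) l₂ (fun x => (p2 x).2.2)
  refine ⟨?_, ?_, ?_, ?_⟩
  · intro x
    rw [hE]
  · -- boundary condition
    intro x hx
    rw [hE]
    dsimp only
    rw [key3 x, Complex.ofReal_eq_zero]
    rcases hx with h | h
    · rw [h]
      simp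
    · rw [h]
      have harg : π * (k₃ : ℝ) * (l₃p + l₃m) / (l₃p + l₃m) = (k₃ : ℝ) * π := by
        field_simp
      rw [harg, Real.sin_nat_mul_pi]
      ring
  · -- periodicity
    intro x
    refine ⟨?_, ?_, ?_, ?_⟩
    · simp only [hE]
      rw [(p1 x).2.1, (p1 x).2.2]
    · simp only [hE]
      rw [(p2 x).2.1, (p2 x).2.2]
    · simp only [hH]
      rw [(q1a x).1, (q1a x).2.1, (q1b x).1, (q1b x).2.2]
    · simp only [hH]
      rw [(q2a x).1, (q2a x).2.1, (q2b x).1, (q2b x).2.2]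
  · -- non-triviality
    intro hne
    have hk1 : (0:ℝ) ≤ (k₁ : ℝ) := Nat.cast_nonneg _
    have hx1mem : l₁ / (4 * ((k₁ : ℝ) + 1)) ∈ Set.Ioo 0 l₁ := by
      constructor
      · positivity
      · exact div_lt_self hl₁ (by linarith)
    have hc1 : 0 < Real.cos (2 * π * (k₁ : ℝ) * (l₁ / (4 * ((k₁ : ℝ) + 1))) / l₁) := by
      have harg : 2 * π * (k₁ : ℝ) * (l₁ / (4 * ((k₁ : ℝ) + 1))) / l₁ =
          π * (k₁ : ℝ) / (2 * ((k₁ : ℝ) + 1)) := by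
        field_simp
        ring
      rw [harg]
      apply Real.cos_pos_of_mem_Ioo
      constructor
      · have : (0:ℝ) ≤ π * (k₁ : ℝ) / (2 * ((k₁ : ℝ) + 1)) := by positivity
        nlinarith [Real.pi_pos]
      · rw [div_lt_div_iff₀ (by linarith) (by norm_num : (0:ℝ) < 2)]
        nlinarith [Real.pi_pos]
    by_cases h3 : k₃ = 0
    · -- then k₂ ≠ 0: use the third component of E
      have hk2 : k₂ ≠ 0 := fun h => hne (by rw [h, h3])
      have hk2' : (1:ℝ) ≤ (k₂ : ℝ) := by exact_mod_cast Nat.one_le_iff_ne_zero.mpr hk2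
      refine ⟨(l₁ / (4 * ((k₁ : ℝ) + 1)), l₂ / (4 * (k₂ : ℝ)), 0), ⟨hx1mem, ?_, ?_⟩, ?_⟩
      · constructor
        · positivity
        · exact div_lt_self hl₂ (by linarith)
      · exact ⟨by linarith, by linarith⟩
      · have h2 : (E (l₁ / (4 * ((k₁ : ℝ) + 1)), l₂ / (4 * (k₂ : ℝ)), 0)).2.2 ≠ 0 := by
          rw [hE]
          dsimp only
          rw [key2 _]
          dsimp only
          have harg2 : 2 * π * (k₂ : ℝ) * (l₂ / (4 * (k₂ : ℝ))) / l₂ = π / 2 := by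
            have : (k₂ : ℝ) ≠ 0 := by linarith
            field_simp
            ring
          have harg3 : π * (k₃ : ℝ) * ((0:ℝ) + l₃m) / (l₃p + l₃m) = 0 := by
            rw [h3]
            simp
          rw [harg2, harg3, Real.sin_pi_div_two, Real.cos_zero, neg_ne_zero,
            Complex.ofReal_ne_zero]
          have hpos : (0:ℝ) < 2 * π * (k₂ : ℝ) * 1 / l₂ := by
            have := Real.pi_pos
            apply div_pos (by nlinarith) hl₂
          nlinarith
        intro h
        exact h2 (by rw [h]; rfl)
    · -- k₃ ≠ 0: use the second component of E
      have hk3' : (1:ℝ) ≤ (k₃ : ℝ) := by exact_mod_cast Nat.one_le_iff_ne_zero.mpr h3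
      refine ⟨(l₁ / (4 * ((k₁ : ℝ) + 1)), l₂ / (4 * ((k₂ : ℝ) + 1)),
        (l₃p + l₃m) / (2 * (k₃ : ℝ)) - l₃m), ⟨hx1mem, ?_, ?_⟩, ?_⟩
      · constructor
        · positivity
        · exact div_lt_self hl₂ (by linarith [Nat.cast_nonneg (α := ℝ) k₂])
      · constructor
        · have : 0 < (l₃p + l₃m) / (2 * (k₃ : ℝ)) := div_pos hL (by linarith)
          linarith
        · have : (l₃p + l₃m) / (2 * (k₃ : ℝ)) < l₃p + l₃m :=
            div_lt_self hL (by linarith)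
          linarith
      · have hk2 : (0:ℝ) ≤ (k₂ : ℝ) := Nat.cast_nonneg _
        have hc2 : 0 < Real.cos (2 * π * (k₂ : ℝ) * (l₂ / (4 * ((k₂ : ℝ) + 1))) / l₂) := by
          have harg : 2 * π * (k₂ : ℝ) * (l₂ / (4 * ((k₂ : ℝ) + 1))) / l₂ =
              π * (k₂ : ℝ) / (2 * ((k₂ : ℝ) + 1)) := by
            field_simp
            ring
          rw [harg]
          apply Real.cos_pos_of_mem_Ioo
          constructor
          · have : (0:ℝ) ≤ π * (k₂ : ℝ) / (2 * ((k₂ : ℝ) + 1)) := by positivity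
            nlinarith [Real.pi_pos]
          · rw [div_lt_div_iff₀ (by linarith) (by norm_num : (0:ℝ) < 2)]
            nlinarith [Real.pi_pos]
        have h2 : (E (l₁ / (4 * ((k₁ : ℝ) + 1)), l₂ / (4 * ((k₂ : ℝ) + 1)),
            (l₃p + l₃m) / (2 * (k₃ : ℝ)) - l₃m)).2.1 ≠ 0 := by
          rw [hE]
          dsimp only
          rw [key3 _]
          dsimp only
          have harg : π * (k₃ : ℝ) * ((l₃p + l₃m) / (2 * (k₃ : ℝ)) - l₃m + l₃m) /
              (l₃p + l₃m) = π / 2 := by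
            have hk3ne : (k₃ : ℝ) ≠ 0 := by linarith
            field_simp
            ring
          rw [harg, Real.sin_pi_div_two, Complex.ofReal_ne_zero]
          have hpos : (0:ℝ) < π * (k₃ : ℝ) * 1 / (l₃p + l₃m) := by
            have := Real.pi_pos
            apply div_pos (by nlinarith) hL
          refine ne_of_lt ?_
          nlinarith [mul_pos (mul_pos hc1 hc2) hpos]
        intro h
        exact h2 (by rw [h]; rfl)
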